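/- Every d-minimal triangle (a triangle with vertices in the lattice (1/d)Z × (1/d)Z whose intersection with that lattice consists precisely of its three vertices) has area 1/(2d²). -/

import Mathlib

noncomputable section

/-- The lattice `(1/d)ℤ × (1/d)ℤ` inside `ℝ × ℝ`. -/
def Ld (d : ℕ) : Set (ℝ × ℝ) :=
  {p | ∃ a b : ℤ, p = ((a : ℝ) / d, (b : ℝ) / d)}

/-- A `d`-minimal triangle: vertices in `L_d`, not collinear, and the closed triangle
meets `L_d` exactly in its three vertices. -/
def IsMinimalTriangle (d : ℕ) (p q r : ℝ × ℝ) : Prop :=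
  p ∈ Ld d ∧ q ∈ Ld d ∧ r ∈ Ld d ∧
    ¬ Collinear ℝ ({p, q, r} : Set (ℝ × ℝ)) ∧
    convexHull ℝ ({p, q, r} : Set (ℝ × ℝ)) ∩ Ld d = {p, q, r}

/-- An element of `G = GL₂(ℤ) ⋉ ℤ²`: an integer matrix `[[a,b],[c,e]]` of determinant
`±1` together with an integer translation vector `(v1, v2)`. -/
structure GMap where
  a : ℤ
  b : ℤ
  c : ℤ
  e : ℤ
  v1 : ℤ
  v2 : ℤ
  unimod : a * e - b * c = 1 ∨ a * e - b * c = -1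

/-- The affine action `x ↦ Ux + v` of a `GMap` on `ℝ²`. -/
def GMap.app (g : GMap) (p : ℝ × ℝ) : ℝ × ℝ :=
  ((g.a : ℝ) * p.1 + (g.b : ℝ) * p.2 + (g.v1 : ℝ),
   (g.c : ℝ) * p.1 + (g.e : ℝ) * p.2 + (g.v2 : ℝ))

/-- A `d`-minimal segment: endpoints in `L_d`, distinct, and the closed segment meets
`L_d` exactly in its two endpoints. -/
def IsMinimalSegment (d : ℕ) (p q : ℝ × ℝ) : Prop :=
  p ∈ Ld d ∧ q ∈ Ld d ∧ p ≠ q ∧ segment ℝ p q ∩ Ld d = {p, q}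

/-- The point of `L_d` with integer numerator data `p : ℤ × ℤ`. -/
def pt (d : ℕ) (p : ℤ × ℤ) : ℝ × ℝ := ((p.1 : ℝ) / d, (p.2 : ℝ) / d)

/-- Counterclockwise orientation of the ordered triple of numerator data. -/
def ccwZ (p q r : ℤ × ℤ) : Prop :=
  0 < (q.1 - p.1) * (r.2 - p.2) - (q.2 - p.2) * (r.1 - p.1)

/-- Weight (mod `d`) of the oriented minimal segment from `(w/d, x/d)` to `(y/d, z/d)`,
given by numerator data `(w,x)` and `(y,z)`. -/
def segWeight (d : ℕ) (p q : ℤ × ℤ) : ZMod d :=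
  ((p.1 * q.2 - p.2 * q.1 : ℤ) : ZMod d)

/-- The multiset of weights of the three edges `p→q`, `q→r`, `r→p` of a triangle
given by numerator data. -/
def triWeight (d : ℕ) (p q r : ℤ × ℤ) : Multiset (ZMod d) :=
  {segWeight d p q, segWeight d q r, segWeight d r p}

section MinTriAux
open MeasureTheory Set Pointwise

/-! Auxiliary lemmas for the area formula. -/

/-- The linear map on `ℝ × ℝ` given by the matrix `!![a,b;c,e]`. -/
def MinTriM2 (a b c e : ℝ) : (ℝ × ℝ) →ₗ[ℝ] (ℝ × ℝ) :=
  Matrix.toLin (Module.Basis.finTwoProd ℝ) (Module.Basis.finTwoProd ℝ) !![a, b; c, e]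

lemma MinTriM2_apply (a b c e : ℝ) (x : ℝ × ℝ) :
    MinTriM2 a b c e x = (a * x.1 + b * x.2, c * x.1 + e * x.2) :=
  Matrix.toLin_finTwoProd_apply a b c e x

lemma MinTriM2_det (a b c e : ℝ) : LinearMap.det (MinTriM2 a b c e) = a * e - b * c := by
  rw [MinTriM2, LinearMap.det_toLin, Matrix.det_fin_two_of]

lemma minTri_null_horizontal (c : ℝ) : volume {x : ℝ × ℝ | x.2 = c} = 0 := by
  have h : {x : ℝ × ℝ | x.2 = c} = (univ : Set ℝ) ×ˢ ({c} : Set ℝ) := by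
    ext x
    simp only [mem_setOf_eq, mem_prod, mem_univ, mem_singleton_iff, true_and]
  rw [h, Measure.volume_eq_prod, Measure.prod_prod]
  simp

lemma minTri_null_diag : volume {x : ℝ × ℝ | x.1 + x.2 = 1} = 0 := by
  have h : {x : ℝ × ℝ | x.1 + x.2 = 1} = (MinTriM2 1 0 (-1) 1) '' {x : ℝ × ℝ | x.2 = 1} := by
    ext x
    constructor
    · rintro hx
      refine ⟨(x.1, 1), by simp, ?_⟩
      simp only [MinTriM2_apply, mem_setOf_eq] at hx ⊢
      have hxx : x = (x.1, x.2) := rfl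
      rw [hxx]
      simp only [Prod.mk.injEq]
      constructor <;> [ring; linarith]
    · rintro ⟨y, hy, rfl⟩
      simp only [mem_setOf_eq] at hy ⊢
      simp [MinTriM2_apply, hy]
  rw [h, Measure.addHaar_image_linearMap, minTri_null_horizontal, mul_zero]

lemma minTri_combo_mem {p q r x : ℝ × ℝ} {a b c : ℝ} (ha : 0 ≤ a) (hb : 0 ≤ b) (hc : 0 ≤ c)
    (habc : a + b + c = 1) (hx : x = a • p + b • q + c • r) :
    x ∈ convexHull ℝ ({p, q, r} : Set (ℝ × ℝ)) := by
  have hp : p ∈ convexHull ℝ ({p, q, r} : Set (ℝ × ℝ)) := subset_convexHull ℝ _ (by simp)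
  have hq : q ∈ convexHull ℝ ({p, q, r} : Set (ℝ × ℝ)) := subset_convexHull ℝ _ (by simp)
  have hr : r ∈ convexHull ℝ ({p, q, r} : Set (ℝ × ℝ)) := subset_convexHull ℝ _ (by simp)
  have hconv := convex_convexHull ℝ ({p, q, r} : Set (ℝ × ℝ))
  rcases eq_or_lt_of_le (add_nonneg hb hc) with hbc | hbc
  · have hb0 : b = 0 := by linarith
    have hc0 : c = 0 := by linarith
    have ha1 : a = 1 := by linarith
    rw [hx, hb0, hc0, ha1]; simpa using hp
  · set z : ℝ × ℝ := (b / (b + c)) • q + (c / (b + c)) • r with hz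
    have hzmem : z ∈ convexHull ℝ ({p, q, r} : Set (ℝ × ℝ)) := by
      refine hconv hq hr (by positivity) (by positivity) ?_
      field_simp
    have hxz : x = a • p + (b + c) • z := by
      rw [hx, hz, smul_add, smul_smul, smul_smul, add_assoc]
      rw [mul_div_cancel₀ _ (ne_of_gt hbc), mul_div_cancel₀ _ (ne_of_gt hbc)]
    rw [hxz]
    exact hconv hp hzmem ha (le_of_lt hbc) (by linarith)

lemma minTri_T0_eq : convexHull ℝ ({(0,0), (1,0), (0,1)} : Set (ℝ × ℝ))
    = {x : ℝ × ℝ | 0 ≤ x.1 ∧ 0 ≤ x.2 ∧ x.1 + x.2 ≤ 1} := by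
  apply Subset.antisymm
  · apply convexHull_min
    · rintro x hx
      rcases hx with rfl | rfl | rfl <;> norm_num
    · rintro x ⟨hx1, hx2, hx3⟩ y ⟨hy1, hy2, hy3⟩ a b ha hb hab
      refine ⟨?_, ?_, ?_⟩ <;> simp only [Prod.fst_add, Prod.snd_add, Prod.smul_fst, Prod.smul_snd,
        smul_eq_mul]
      · positivity
      · positivity
      · nlinarith
  · rintro x ⟨hx1, hx2, hx3⟩
    exact minTri_combo_mem (a := 1 - x.1 - x.2) (b := x.1) (c := x.2)
      (by linarith) hx1 hx2 (by ring) (by ext <;> simp)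

lemma minTri_T0_volume : volume (convexHull ℝ ({(0,0), (1,0), (0,1)} : Set (ℝ × ℝ)))
    = ENNReal.ofReal (1/2) := by
  rw [minTri_T0_eq]
  set R : Set (ℝ × ℝ) := {x : ℝ × ℝ | 0 ≤ x.1 ∧ 0 ≤ x.2 ∧ x.1 + x.2 ≤ 1}
  set O : Set (ℝ × ℝ) := regionBetween (fun _ => (0:ℝ)) (fun x => 1 - x) (Icc 0 1)
  have hOvol : volume O = ENNReal.ofReal (1/2) := by
    have h1 : IntegrableOn (fun _ : ℝ => (0:ℝ)) (Icc 0 1) volume := integrableOn_const (by simp) (by simp)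
    have h2 : IntegrableOn (fun x : ℝ => 1 - x) (Icc 0 1) volume :=
      (continuous_const.sub continuous_id).integrableOn_Icc
    have hreg := volume_regionBetween_eq_integral h1 h2 measurableSet_Icc
      (fun x hx => by show (0:ℝ) ≤ 1 - x; linarith [hx.2])
    rw [Measure.volume_eq_prod, hreg]
    congr 1
    simp only [Pi.sub_apply, sub_zero]
    rw [MeasureTheory.integral_Icc_eq_integral_Ioc, ← intervalIntegral.integral_of_le zero_le_one]
    have hsub := intervalIntegral.integral_sub (μ := volume)
      (f := fun _ : ℝ => (1:ℝ)) (g := fun x : ℝ => x) (a := 0) (b := 1)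
      (intervalIntegrable_const) intervalIntegral.intervalIntegrable_id
    rw [hsub]
    simp [integral_id]
    norm_num
  have hsub1 : O ⊆ R := by
    rintro x ⟨hx1, hx2⟩
    exact ⟨hx1.1, le_of_lt hx2.1, by have := hx2.2; dsimp at this; linarith⟩
  have hsub2 : R ⊆ O ∪ ({x : ℝ × ℝ | x.2 = 0} ∪ {x : ℝ × ℝ | x.1 + x.2 = 1}) := by
    rintro x ⟨hx1, hx2, hx3⟩
    rcases eq_or_lt_of_le hx2 with h | h
    · exact Or.inr (Or.inl h.symm)
    rcases eq_or_lt_of_le hx3 with h' | h'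
    · exact Or.inr (Or.inr h')
    · exact Or.inl ⟨⟨hx1, by linarith⟩, ⟨h, by dsimp; linarith⟩⟩
  refine le_antisymm ?_ ?_
  · calc volume R ≤ volume O + volume ({x : ℝ × ℝ | x.2 = 0} ∪ {x : ℝ × ℝ | x.1 + x.2 = 1}) :=
        le_trans (measure_mono hsub2) (measure_union_le _ _)
    _ ≤ volume O + (volume {x : ℝ × ℝ | x.2 = 0} + volume {x : ℝ × ℝ | x.1 + x.2 = 1}) :=
        add_le_add le_rfl (measure_union_le _ _)
    _ = ENNReal.ofReal (1/2) := by
        rw [minTri_null_horizontal, minTri_null_diag, hOvol]; simp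
  · rw [← hOvol]; exact measure_mono hsub1

lemma minTri_volume_triangle (p q r : ℝ × ℝ) :
    volume (convexHull ℝ ({p, q, r} : Set (ℝ × ℝ)))
      = ENNReal.ofReal (|(q.1-p.1)*(r.2-p.2) - (q.2-p.2)*(r.1-p.1)| / 2) := by
  set u : ℝ × ℝ := q - p
  set v : ℝ × ℝ := r - p
  set M := MinTriM2 u.1 v.1 u.2 v.2
  have himg : M '' ({(0,0), (1,0), (0,1)} : Set (ℝ × ℝ)) = {0, u, v} := by
    rw [Set.image_insert_eq, Set.image_insert_eq, Set.image_singleton]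
    simp [MinTriM2_apply, M]; rfl
  have htrans : ({p, q, r} : Set (ℝ × ℝ)) = p +ᵥ ({0, u, v} : Set (ℝ × ℝ)) := by
    rw [Set.vadd_set_insert, Set.vadd_set_insert, Set.vadd_set_singleton]
    simp [u, v, vadd_eq_add]
  rw [htrans, convexHull_vadd, measure_vadd, ← himg, ← LinearMap.image_convexHull,
    Measure.addHaar_image_linearMap, minTri_T0_volume, MinTriM2_det]
  rw [← ENNReal.ofReal_mul (abs_nonneg _)]
  congr 1
  have h1 : u.1 = q.1 - p.1 := rfl
  have h2 : u.2 = q.2 - p.2 := rfl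
  have h3 : v.1 = r.1 - p.1 := rfl
  have h4 : v.2 = r.2 - p.2 := rfl
  rw [h1, h2, h3, h4]; ring

end MinTriAux

open MeasureTheory Set Pointwise in
/-- every `d`-minimal triangle has area `1/(2d²)`. -/
theorem minimal_triangle_area (d : ℕ) (hd : 0 < d) (p q r : ℝ × ℝ)
    (h : IsMinimalTriangle d p q r) :
    MeasureTheory.volume (convexHull ℝ ({p, q, r} : Set (ℝ × ℝ)))
      = ENNReal.ofReal (1 / (2 * (d : ℝ) ^ 2)) := by
  obtain ⟨hp, hq, hr, hcol, hcap⟩ := h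
  obtain ⟨P1, P2, hP⟩ := hp
  obtain ⟨Q1, Q2, hQ⟩ := hq
  obtain ⟨R1, R2, hR⟩ := hr
  have hdne : (d:ℝ) ≠ 0 := Nat.cast_ne_zero.2 hd.ne'
  have hdpos : (0:ℝ) < d := Nat.cast_pos.2 hd
  subst hP; subst hQ; subst hR
  obtain ⟨U1, hU1⟩ : ∃ u : ℤ, u = Q1 - P1 := ⟨_, rfl⟩
  obtain ⟨U2, hU2⟩ : ∃ u : ℤ, u = Q2 - P2 := ⟨_, rfl⟩
  obtain ⟨V1, hV1⟩ : ∃ u : ℤ, u = R1 - P1 := ⟨_, rfl⟩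
  obtain ⟨V2, hV2⟩ : ∃ u : ℤ, u = R2 - P2 := ⟨_, rfl⟩
  obtain ⟨D, hD⟩ : ∃ u : ℤ, u = U1 * V2 - U2 * V1 := ⟨_, rfl⟩
  -- D ≠ 0 from non-collinearity
  have hD0 : D ≠ 0 := by
    intro h0
    apply hcol
    rw [collinear_iff_of_mem (Set.mem_insert _ _)]
    by_cases hU : U1 = 0 ∧ U2 = 0
    · obtain ⟨h1, h2⟩ := hU
      have hQ1 : Q1 = P1 := by omega
      have hQ2 : Q2 = P2 := by omega
      refine ⟨((R1:ℝ)/d, (R2:ℝ)/d) - ((P1:ℝ)/d, (P2:ℝ)/d), ?_⟩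
      rintro x (rfl | rfl | rfl)
      · exact ⟨0, by simp⟩
      · exact ⟨0, by simp [hQ1, hQ2]⟩
      · exact ⟨1, by simp⟩
    · refine ⟨((Q1:ℝ)/d, (Q2:ℝ)/d) - ((P1:ℝ)/d, (P2:ℝ)/d), ?_⟩
      have hUne : ¬((U1:ℝ) = 0 ∧ (U2:ℝ) = 0) := by
        rintro ⟨a, b⟩
        exact hU ⟨by exact_mod_cast a, by exact_mod_cast b⟩
      have hden : 0 < (U1:ℝ)^2 + (U2:ℝ)^2 := by
        rcases not_and_or.mp hUne with hne | hne
        · have h1 : 0 < (U1:ℝ)^2 := by positivity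
          nlinarith [sq_nonneg (U2:ℝ)]
        · have h1 : 0 < (U2:ℝ)^2 := by positivity
          nlinarith [sq_nonneg (U1:ℝ)]
      have h0' : U1 * V2 - U2 * V1 = 0 := by rw [← hD]; exact h0
      have hcast : (U1:ℝ) * V2 - U2 * V1 = 0 := by exact_mod_cast congrArg (Int.cast : ℤ → ℝ) h0'
      set c : ℝ := ((V1:ℝ) * U1 + (V2:ℝ) * U2) / ((U1:ℝ)^2 + (U2:ℝ)^2) with hc
      rintro x (rfl | rfl | rfl)
      · exact ⟨0, by simp⟩
      · exact ⟨1, by rw [Prod.ext_iff]; constructor <;> simp⟩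
      · refine ⟨c, ?_⟩
        rw [Prod.ext_iff]
        have e1 : (U1:ℝ) = (Q1:ℝ) - (P1:ℝ) := by rw [hU1]; push_cast; ring
        have e2 : (U2:ℝ) = (Q2:ℝ) - (P2:ℝ) := by rw [hU2]; push_cast; ring
        have e3 : (V1:ℝ) = (R1:ℝ) - (P1:ℝ) := by rw [hV1]; push_cast; ring
        have e4 : (V2:ℝ) = (R2:ℝ) - (P2:ℝ) := by rw [hV2]; push_cast; ring
        rw [e1, e2, e3, e4] at hcast
        constructor
        · show (R1:ℝ)/d = c * ((Q1:ℝ)/d - (P1:ℝ)/d) + (P1:ℝ)/d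
          rw [hc]
          field_simp
          rw [e1, e2, e3, e4]
          linear_combination (-(1:ℝ) * ((Q2:ℝ) - (P2:ℝ))) * hcast
        · show (R2:ℝ)/d = c * ((Q2:ℝ)/d - (P2:ℝ)/d) + (P2:ℝ)/d
          rw [hc]
          field_simp
          rw [e1, e2, e3, e4]
          linear_combination ((1:ℝ) * ((Q1:ℝ) - (P1:ℝ))) * hcast
  -- cast facts
  have hDne : ((D:ℝ)) ≠ 0 → True := fun _ => trivial
  have e1 : (U1:ℝ) = (Q1:ℝ) - (P1:ℝ) := by rw [hU1]; push_cast; ring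
  have e2 : (U2:ℝ) = (Q2:ℝ) - (P2:ℝ) := by rw [hU2]; push_cast; ring
  have e3 : (V1:ℝ) = (R1:ℝ) - (P1:ℝ) := by rw [hV1]; push_cast; ring
  have e4 : (V2:ℝ) = (R2:ℝ) - (P2:ℝ) := by rw [hV2]; push_cast; ring
  have hDcast : (D:ℝ) = (U1:ℝ) * V2 - (U2:ℝ) * V1 := by rw [hD]; push_cast; ring
  have hDr : ((D:ℝ)) ≠ 0 := Int.cast_ne_zero.2 hD0
  -- key exclusion lemma
  have key : ∀ s t : ℝ, ∀ W1 W2 : ℤ, 0 ≤ s → 0 ≤ t → s + t ≤ 1 →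
      ((W1:ℝ) = P1 + s * U1 + t * V1) → ((W2:ℝ) = P2 + s * U2 + t * V2) →
      (s = 0 ∧ t = 0) ∨ (s = 1 ∧ t = 0) ∨ (s = 0 ∧ t = 1) := by
    intro s t W1 W2 hs ht hst hW1 hW2
    set w : ℝ × ℝ := ((W1:ℝ)/d, (W2:ℝ)/d) with hw
    have hwhull : w ∈ convexHull ℝ
        ({((P1:ℝ)/d, (P2:ℝ)/d), ((Q1:ℝ)/d, (Q2:ℝ)/d), ((R1:ℝ)/d, (R2:ℝ)/d)} : Set (ℝ × ℝ)) := by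
      refine minTri_combo_mem (a := 1 - s - t) (b := s) (c := t) (by linarith) hs ht (by ring) ?_
      rw [Prod.ext_iff]
      simp only [Prod.fst_add, Prod.snd_add, Prod.smul_fst, Prod.smul_snd, smul_eq_mul]
      constructor
      · show (W1:ℝ)/d = (1 - s - t) * ((P1:ℝ)/d) + s * ((Q1:ℝ)/d) + t * ((R1:ℝ)/d)
        rw [hW1, e1, e3]; field_simp; ring
      · show (W2:ℝ)/d = (1 - s - t) * ((P2:ℝ)/d) + s * ((Q2:ℝ)/d) + t * ((R2:ℝ)/d)
        rw [hW2, e2, e4]; field_simp; ring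
    have hwLd : w ∈ Ld d := ⟨W1, W2, rfl⟩
    have hwmem : w ∈ ({((P1:ℝ)/d, (P2:ℝ)/d), ((Q1:ℝ)/d, (Q2:ℝ)/d), ((R1:ℝ)/d, (R2:ℝ)/d)} :
        Set (ℝ × ℝ)) := by
      rw [← hcap]; exact ⟨hwhull, hwLd⟩
    rcases hwmem with hweq | hweq | hweq
    · have c1 : (W1:ℝ)/d = (P1:ℝ)/d := congrArg Prod.fst hweq
      have c2 : (W2:ℝ)/d = (P2:ℝ)/d := congrArg Prod.snd hweq
      have c1' : (W1:ℝ) = (P1:ℝ) := by field_simp at c1; exact_mod_cast c1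
      have c2' : (W2:ℝ) = (P2:ℝ) := by field_simp at c2; exact_mod_cast c2
      have f1 : s * (U1:ℝ) + t * (V1:ℝ) = 0 := by linear_combination c1' - hW1
      have f2 : s * (U2:ℝ) + t * (V2:ℝ) = 0 := by linear_combination c2' - hW2
      have hs0 : s = 0 := by
        have hsD : s * (D:ℝ) = 0 := by
          rw [hDcast]; linear_combination (V2:ℝ) * f1 - (V1:ℝ) * f2
        exact (mul_eq_zero.mp hsD).resolve_right hDr
      have ht0 : t = 0 := by
        have htD : t * (D:ℝ) = 0 := by
          rw [hDcast]; linear_combination (U1:ℝ) * f2 - (U2:ℝ) * f1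
        exact (mul_eq_zero.mp htD).resolve_right hDr
      exact Or.inl ⟨hs0, ht0⟩
    · have c1 : (W1:ℝ)/d = (Q1:ℝ)/d := congrArg Prod.fst hweq
      have c2 : (W2:ℝ)/d = (Q2:ℝ)/d := congrArg Prod.snd hweq
      have c1' : (W1:ℝ) = (Q1:ℝ) := by field_simp at c1; exact_mod_cast c1
      have c2' : (W2:ℝ) = (Q2:ℝ) := by field_simp at c2; exact_mod_cast c2
      have f1 : (s - 1) * (U1:ℝ) + t * (V1:ℝ) = 0 := by
        linear_combination c1' - hW1 - e1
      have f2 : (s - 1) * (U2:ℝ) + t * (V2:ℝ) = 0 := by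
        linear_combination c2' - hW2 - e2
      have hs0 : s - 1 = 0 := by
        have hsD : (s - 1) * (D:ℝ) = 0 := by
          rw [hDcast]; linear_combination (V2:ℝ) * f1 - (V1:ℝ) * f2
        exact (mul_eq_zero.mp hsD).resolve_right hDr
      have ht0 : t = 0 := by
        have htD : t * (D:ℝ) = 0 := by
          rw [hDcast]; linear_combination (U1:ℝ) * f2 - (U2:ℝ) * f1
        exact (mul_eq_zero.mp htD).resolve_right hDr
      exact Or.inr (Or.inl ⟨by linarith, ht0⟩)
    · have c1 : (W1:ℝ)/d = (R1:ℝ)/d := congrArg Prod.fst hweq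
      have c2 : (W2:ℝ)/d = (R2:ℝ)/d := congrArg Prod.snd hweq
      have c1' : (W1:ℝ) = (R1:ℝ) := by field_simp at c1; exact_mod_cast c1
      have c2' : (W2:ℝ) = (R2:ℝ) := by field_simp at c2; exact_mod_cast c2
      have f1 : s * (U1:ℝ) + (t - 1) * (V1:ℝ) = 0 := by
        linear_combination c1' - hW1 - e3
      have f2 : s * (U2:ℝ) + (t - 1) * (V2:ℝ) = 0 := by
        linear_combination c2' - hW2 - e4
      have hs0 : s = 0 := by
        have hsD : s * (D:ℝ) = 0 := by
          rw [hDcast]; linear_combination (V2:ℝ) * f1 - (V1:ℝ) * f2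
        exact (mul_eq_zero.mp hsD).resolve_right hDr
      have ht0 : t - 1 = 0 := by
        have htD : (t - 1) * (D:ℝ) = 0 := by
          rw [hDcast]; linear_combination (U1:ℝ) * f2 - (U2:ℝ) * f1
        exact (mul_eq_zero.mp htD).resolve_right hDr
      exact Or.inr (Or.inr ⟨hs0, by linarith⟩)
  -- |D| = 1
  have habs : |D| = 1 := by
    by_contra habs
    have hD2 : 2 ≤ |D| := by
      have := Int.one_le_abs (by exact hD0)
      omega
    have hnotall : ¬(D ∣ U1 ∧ D ∣ U2 ∧ D ∣ V1 ∧ D ∣ V2) := by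
      rintro ⟨⟨u1, hu1⟩, ⟨u2, hu2⟩, ⟨v1, hv1⟩, ⟨v2, hv2⟩⟩
      have hD' := hD
      rw [hu1, hu2, hv1, hv2] at hD'
      have hdvd : D * D ∣ D := ⟨u1 * v2 - u2 * v1, by linear_combination hD'⟩
      have hle : |D * D| ≤ |D| := Int.le_of_dvd (abs_pos.2 hD0) ((abs_dvd _ _).2 ((dvd_abs _ _).2 hdvd))
      rw [abs_mul] at hle
      nlinarith
    obtain ⟨α, β, z1, z2, hid1, hid2, hnd⟩ : ∃ α β z1 z2 : ℤ,
        α * U1 + β * V1 = D * z1 ∧ α * U2 + β * V2 = D * z2 ∧ ¬(D ∣ α ∧ D ∣ β) := by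
      by_cases h1 : D ∣ V2 ∧ D ∣ U2
      · refine ⟨-V1, U1, 0, 1, by rw [hD]; ring, by rw [hD]; ring, ?_⟩
        rintro ⟨ha, hb⟩
        exact hnotall ⟨hb, h1.2, (dvd_neg).1 ha, h1.1⟩
      · refine ⟨V2, -U2, 1, 0, by rw [hD]; ring, by rw [hD]; ring, ?_⟩
        rintro ⟨ha, hb⟩
        exact h1 ⟨ha, (dvd_neg).1 hb⟩
    set s0 : ℝ := (α:ℝ)/D with hs0def
    set t0 : ℝ := (β:ℝ)/D with ht0def
    set s : ℝ := Int.fract s0 with hsdef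
    set t : ℝ := Int.fract t0 with htdef
    have hs_nonneg : 0 ≤ s := Int.fract_nonneg s0
    have ht_nonneg : 0 ≤ t := Int.fract_nonneg t0
    have hs_lt : s < 1 := Int.fract_lt_one s0
    have ht_lt : t < 1 := Int.fract_lt_one t0
    have hnz : ¬(s = 0 ∧ t = 0) := by
      rintro ⟨hs0, ht0⟩
      apply hnd
      constructor
      · refine ⟨⌊s0⌋, ?_⟩
        have : s0 = (⌊s0⌋ : ℝ) := by
          have := Int.fract_add_floor s0
          rw [hsdef] at hs0
          linarith [hs0 ▸ this]
        have hα : (α:ℝ) = (D:ℝ) * (⌊s0⌋ : ℝ) := by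
          rw [← this, hs0def]; field_simp
        exact_mod_cast hα
      · refine ⟨⌊t0⌋, ?_⟩
        have : t0 = (⌊t0⌋ : ℝ) := by
          have := Int.fract_add_floor t0
          rw [htdef] at ht0
          linarith [ht0 ▸ this]
        have hβ : (β:ℝ) = (D:ℝ) * (⌊t0⌋ : ℝ) := by
          rw [← this, ht0def]; field_simp
        exact_mod_cast hβ
    -- real identities
    have hr1 : s0 * (U1:ℝ) + t0 * (V1:ℝ) = (z1:ℝ) := by
      rw [hs0def, ht0def]
      field_simp
      have : ((α * U1 + β * V1 : ℤ) : ℝ) = ((D * z1 : ℤ) : ℝ) := by exact_mod_cast hid1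
      push_cast at this
      linarith [this]
    have hr2 : s0 * (U2:ℝ) + t0 * (V2:ℝ) = (z2:ℝ) := by
      rw [hs0def, ht0def]
      field_simp
      have : ((α * U2 + β * V2 : ℤ) : ℝ) = ((D * z2 : ℤ) : ℝ) := by exact_mod_cast hid2
      push_cast at this
      linarith [this]
    set W1 : ℤ := z1 - ⌊s0⌋ * U1 - ⌊t0⌋ * V1 + P1 with hW1def
    set W2 : ℤ := z2 - ⌊s0⌋ * U2 - ⌊t0⌋ * V2 + P2 with hW2def
    have hfs : s = s0 - (⌊s0⌋ : ℝ) := by rw [hsdef, Int.self_sub_floor]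
    have hft : t = t0 - (⌊t0⌋ : ℝ) := by rw [htdef, Int.self_sub_floor]
    have hW1r : (W1:ℝ) = P1 + s * U1 + t * V1 := by
      rw [hW1def]; push_cast
      rw [hfs, hft]
      linear_combination -hr1
    have hW2r : (W2:ℝ) = P2 + s * U2 + t * V2 := by
      rw [hW2def]; push_cast
      rw [hfs, hft]
      linear_combination -hr2
    by_cases hst : s + t ≤ 1
    · rcases key s t W1 W2 hs_nonneg ht_nonneg hst hW1r hW2r with hk | hk | hk
      · exact hnz hk
      · linarith [hk.1]
      · linarith [hk.2]
    · have hW1r' : ((Q1 + R1 - W1 : ℤ):ℝ) = P1 + (1-s) * U1 + (1-t) * V1 := by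
        push_cast
        rw [e1, e3] at hW1r ⊢
        linarith [hW1r]
      have hW2r' : ((Q2 + R2 - W2 : ℤ):ℝ) = P2 + (1-s) * U2 + (1-t) * V2 := by
        push_cast
        rw [e2, e4] at hW2r ⊢
        linarith [hW2r]
      rcases key (1-s) (1-t) (Q1 + R1 - W1) (Q2 + R2 - W2) (by linarith) (by linarith)
        (by linarith) hW1r' hW2r' with hk | hk | hk
      · linarith [hk.1]
      · linarith [hk.2]
      · linarith [hk.1]
  -- conclusion
  rw [minTri_volume_triangle]
  congr 1
  have hdet : (((Q1:ℝ)/d) - ((P1:ℝ)/d)) * (((R2:ℝ)/d) - ((P2:ℝ)/d))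
      - (((Q2:ℝ)/d) - ((P2:ℝ)/d)) * (((R1:ℝ)/d) - ((P1:ℝ)/d)) = (D:ℝ) / (d:ℝ)^2 := by
    rw [hDcast, e1, e2, e3, e4]
    have hh : ∀ a b : ℝ, a/(d:ℝ) - b/(d:ℝ) = (a-b)/(d:ℝ) := fun a b => (sub_div a b _).symm
    rw [hh, hh, hh, hh, div_mul_div_comm, div_mul_div_comm, div_sub_div_same, sq]
  show |_| / 2 = _
  rw [hdet, abs_div, abs_of_pos (by positivity : (0:ℝ) < (d:ℝ)^2)]
  have : |(D:ℝ)| = 1 := by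
    rw [← Int.cast_abs, habs]; norm_num
  rw [this, div_div]
  ring_nf
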